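/- Let H be a finite-dimensional unimodular Hopf algebra with right integral λ ∈ H*. Then λ is a quantum character: λ(xy) = λ(S²(y)x) for all x, y ∈ H. -/

import Mathlib

open TensorProduct

/-- Convolution product on the dual of a Hopf algebra: `(f * g)(x) = f(x₍₁₎) g(x₍₂₎)`. -/
noncomputable def conv {k H : Type} [Field k] [Ring H] [HopfAlgebra k H]
    (f g : H →ₗ[k] k) : H →ₗ[k] k :=
  (LinearMap.mul' k k) ∘ₗ (TensorProduct.map f g) ∘ₗ (Coalgebra.comul (R := k) (A := H))

open Coalgebra

namespace QCAux

variable {k H : Type} [Field k] [Ring H] [HopfAlgebra k H]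

noncomputable def mk₃ {W : Type} [AddCommGroup W] [Module k W] (f : H → H → H → W)
    (ha1 : ∀ u u' w z, f (u + u') w z = f u w z + f u' w z)
    (hs1 : ∀ (c : k) u w z, f (c • u) w z = c • f u w z)
    (ha2 : ∀ u w w' z, f u (w + w') z = f u w z + f u w' z)
    (hs2 : ∀ (c : k) u w z, f u (c • w) z = c • f u w z)
    (ha3 : ∀ u w z z', f u w (z + z') = f u w z + f u w z')
    (hs3 : ∀ (c : k) u w z, f u w (c • z) = c • f u w z) :
    H →ₗ[k] H →ₗ[k] H →ₗ[k] W :=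
  LinearMap.mk₂ k
    (fun u w => LinearMap.mk (AddHom.mk (f u w) (ha3 u w)) (fun c z => hs3 c u w z))
    (fun u u' w => LinearMap.ext fun z => ha1 u u' w z)
    (fun c u w => LinearMap.ext fun z => hs1 c u w z)
    (fun u w w' => LinearMap.ext fun z => ha2 u w w' z)
    (fun c u w => LinearMap.ext fun z => hs2 c u w z)

lemma trip {W : Type} [AddCommGroup W] [Module k W]
    (T : H →ₗ[k] H →ₗ[k] H →ₗ[k] W) {a : H} {ι : Type} {κ μ : ι → Type} (r : Repr k a ι)
    (rl : ∀ i : ι, Repr k (r.left i) (κ i)) (rr : ∀ i : ι, Repr k (r.right i) (μ i)) :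
    ∑ i ∈ r.index, ∑ j ∈ (rl i).index,
        T ((rl i).left j) ((rl i).right j) (r.right i)
      = ∑ i ∈ r.index, ∑ j ∈ (rr i).index,
        T (r.left i) ((rr i).left j) ((rr i).right j) := by
  have h := Coalgebra.sum_tmul_tmul_eq (R := k) r rl rr
  let F : H ⊗[k] (H ⊗[k] H) →ₗ[k] W :=
    TensorProduct.lift ((TensorProduct.lift.equiv (RingHom.id k) H H W).toLinearMap ∘ₗ T)
  have hF : ∀ u w z : H, F (u ⊗ₜ[k] (w ⊗ₜ[k] z)) = T u w z := by
    intro u w z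
    simp [F, TensorProduct.lift.equiv]
  calc ∑ i ∈ r.index, ∑ j ∈ (rl i).index,
        T ((rl i).left j) ((rl i).right j) (r.right i)
      = F (∑ i ∈ r.index, ∑ j ∈ (rl i).index,
          (rl i).left j ⊗ₜ[k] ((rl i).right j ⊗ₜ[k] r.right i)) := by
        simp [map_sum, hF]
    _ = F (∑ i ∈ r.index, ∑ j ∈ (rr i).index,
          r.left i ⊗ₜ[k] ((rr i).left j ⊗ₜ[k] (rr i).right j)) := by rw [h]
    _ = ∑ i ∈ r.index, ∑ j ∈ (rr i).index,
        T (r.left i) ((rr i).left j) ((rr i).right j) := by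
        simp [map_sum, hF]

noncomputable def mulRepr {a b : H} {ι ι' : Type} (r : Repr k a ι) (s : Repr k b ι') :
    Repr k (a * b) (ι × ι') where
  index := r.index ×ˢ s.index
  left := fun p => r.left p.1 * s.left p.2
  right := fun p => r.right p.1 * s.right p.2
  eq := by
    rw [Finset.sum_product, Bialgebra.comul_mul, ← r.eq, ← s.eq, Finset.sum_mul_sum]
    simp [Algebra.TensorProduct.tmul_mul_tmul]

@[simp] lemma mulRepr_index {a b : H} {ι ι' : Type} (r : Repr k a ι) (s : Repr k b ι') :
    (mulRepr r s).index = r.index ×ˢ s.index := rfl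

@[simp] lemma mulRepr_left {a b : H} {ι ι' : Type} (r : Repr k a ι) (s : Repr k b ι') (p : ι × ι') :
    (mulRepr r s).left p = r.left p.1 * s.left p.2 := rfl

@[simp] lemma mulRepr_right {a b : H} {ι ι' : Type} (r : Repr k a ι) (s : Repr k b ι') (p : ι × ι') :
    (mulRepr r s).right p = r.right p.1 * s.right p.2 := rfl

lemma sum_antipode_mul_mul {a b : H} {ι ι' : Type} (r : Repr k a ι) (s : Repr k b ι') :
    ∑ j ∈ r.index, ∑ n ∈ s.index,
      HopfAlgebra.antipode (R := k) (r.left j * s.left n) * (r.right j * s.right n)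
      = Coalgebra.counit (R := k) (a * b) • (1 : H) := by
  rw [← Finset.sum_product']
  exact HopfAlgebra.sum_antipode_mul_eq_smul (R := k) (mulRepr r s)

lemma sum_counit_smul {a : H} {ι : Type} (r : Repr k a ι) :
    ∑ i ∈ r.index, Coalgebra.counit (R := k) (r.left i) • r.right i = a := by
  have h := Coalgebra.sum_counit_tmul_eq (R := k) r
  have h2 := congrArg (TensorProduct.lid k H) h
  rw [map_sum] at h2
  simp only [TensorProduct.lid_tmul] at h2
  simpa using h2

lemma sum_smul_counit {a : H} {ι : Type} (r : Repr k a ι) :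
    ∑ i ∈ r.index, Coalgebra.counit (R := k) (r.right i) • r.left i = a := by
  have h := Coalgebra.sum_tmul_counit_eq (R := k) r
  have h2 := congrArg (TensorProduct.rid k H) h
  rw [map_sum] at h2
  simp only [TensorProduct.rid_tmul] at h2
  simpa using h2

lemma antipode_one : HopfAlgebra.antipode (R := k) (A := H) 1 = 1 := by
  have h := HopfAlgebra.mul_antipode_rTensor_comul_apply (R := k) (a := (1 : H))
  rw [Bialgebra.comul_one, Algebra.TensorProduct.one_def] at h
  simpa using h

local notation "S" => (HopfAlgebra.antipode (R := k) (A := H))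

/-- The antipode is anti-multiplicative. -/
lemma antipode_mul (a b : H) : S (a * b) = S b * S a := by
  classical
  set ra := ℛ k a with hra
  set rb := ℛ k b with hrb
  set ral : ∀ i : (H × H), Repr k (ra.left i) (H × H) := fun i => ℛ k (ra.left i) with hral
  set rar : ∀ i : (H × H), Repr k (ra.right i) (H × H) := fun i => ℛ k (ra.right i) with hrar
  set rbl : ∀ m : (H × H), Repr k (rb.left m) (H × H) := fun m => ℛ k (rb.left m) with hrbl
  set rbr : ∀ m : (H × H), Repr k (rb.right m) (H × H) := fun m => ℛ k (rb.right m) with hrbr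
  -- the trilinear map in the a-slots
  let F : H →ₗ[k] H →ₗ[k] H →ₗ[k] H := mk₃
    (fun u w z => ∑ m ∈ rb.index, ∑ n ∈ (rbl m).index,
      (S (u * (rbl m).left n) * (w * (rbl m).right n)) * (S (rb.right m) * S z))
    (by intros; simp [add_mul, mul_add, map_add, Finset.sum_add_distrib])
    (by intros; simp [smul_mul_assoc, mul_smul_comm, map_smul, Finset.smul_sum])
    (by intros; simp [add_mul, mul_add, map_add, Finset.sum_add_distrib])
    (by intros; simp [smul_mul_assoc, mul_smul_comm, map_smul, Finset.smul_sum])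
    (by intros; simp [add_mul, mul_add, map_add, Finset.sum_add_distrib])
    (by intros; simp [smul_mul_assoc, mul_smul_comm, map_smul, Finset.smul_sum])
  have key := trip F ra ral rar
  have inner : ∀ (i : (H × H)) (m : (H × H)),
      ∑ j ∈ (ral i).index, ∑ n ∈ (rbl m).index,
        (S ((ral i).left j * (rbl m).left n) * ((ral i).right j * (rbl m).right n))
          * (S (rb.right m) * S (ra.right i))
      = (Coalgebra.counit (R := k) (ra.left i) * Coalgebra.counit (R := k) (rb.left m))
          • (S (rb.right m) * S (ra.right i)) := by
    intro i m
    have hmr := sum_antipode_mul_mul (ral i) (rbl m)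
    calc ∑ j ∈ (ral i).index, ∑ n ∈ (rbl m).index,
          (S ((ral i).left j * (rbl m).left n) * ((ral i).right j * (rbl m).right n))
            * (S (rb.right m) * S (ra.right i))
        = (∑ j ∈ (ral i).index, ∑ n ∈ (rbl m).index,
            S ((ral i).left j * (rbl m).left n) * ((ral i).right j * (rbl m).right n))
            * (S (rb.right m) * S (ra.right i)) := by
          rw [Finset.sum_mul]
          exact Finset.sum_congr rfl fun j _ => by rw [Finset.sum_mul]
      _ = (Coalgebra.counit (R := k) (ra.left i * rb.left m) • (1:H))
            * (S (rb.right m) * S (ra.right i)) := by rw [hmr]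
      _ = (Coalgebra.counit (R := k) (ra.left i) * Coalgebra.counit (R := k) (rb.left m))
            • (S (rb.right m) * S (ra.right i)) := by
          rw [Bialgebra.counit_mul, smul_mul_assoc, one_mul]
  have stepA : ∑ i ∈ ra.index, ∑ j ∈ (ral i).index,
      F ((ral i).left j) ((ral i).right j) (ra.right i) = S b * S a := by
    have expand : ∀ i : (H × H), ∑ j ∈ (ral i).index,
        F ((ral i).left j) ((ral i).right j) (ra.right i)
        = ∑ m ∈ rb.index,
            (Coalgebra.counit (R := k) (ra.left i) * Coalgebra.counit (R := k) (rb.left m))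
              • (S (rb.right m) * S (ra.right i)) := by
      intro i
      calc ∑ j ∈ (ral i).index, F ((ral i).left j) ((ral i).right j) (ra.right i)
          = ∑ j ∈ (ral i).index, ∑ m ∈ rb.index, ∑ n ∈ (rbl m).index,
            (S ((ral i).left j * (rbl m).left n) * ((ral i).right j * (rbl m).right n))
              * (S (rb.right m) * S (ra.right i)) := rfl
        _ = ∑ m ∈ rb.index, ∑ j ∈ (ral i).index, ∑ n ∈ (rbl m).index,
            (S ((ral i).left j * (rbl m).left n) * ((ral i).right j * (rbl m).right n))
              * (S (rb.right m) * S (ra.right i)) := Finset.sum_comm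
        _ = ∑ m ∈ rb.index,
            (Coalgebra.counit (R := k) (ra.left i) * Coalgebra.counit (R := k) (rb.left m))
              • (S (rb.right m) * S (ra.right i)) :=
            Finset.sum_congr rfl fun m _ => inner i m
    have hb : S b = ∑ m ∈ rb.index, Coalgebra.counit (R := k) (rb.left m) • S (rb.right m) := by
      conv_lhs => rw [← sum_counit_smul rb]
      simp [map_sum]
    have ha : S a = ∑ i ∈ ra.index, Coalgebra.counit (R := k) (ra.left i) • S (ra.right i) := by
      conv_lhs => rw [← sum_counit_smul ra]
      simp [map_sum]
    calc ∑ i ∈ ra.index, ∑ j ∈ (ral i).index,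
          F ((ral i).left j) ((ral i).right j) (ra.right i)
        = ∑ i ∈ ra.index, ∑ m ∈ rb.index,
            (Coalgebra.counit (R := k) (ra.left i) * Coalgebra.counit (R := k) (rb.left m))
              • (S (rb.right m) * S (ra.right i)) :=
          Finset.sum_congr rfl fun i _ => expand i
      _ = ∑ m ∈ rb.index, ∑ i ∈ ra.index,
            (Coalgebra.counit (R := k) (ra.left i) * Coalgebra.counit (R := k) (rb.left m))
              • (S (rb.right m) * S (ra.right i)) := Finset.sum_comm
      _ = S b * S a := by
          rw [hb, ha, Finset.sum_mul_sum]
          refine Finset.sum_congr rfl fun m _ => Finset.sum_congr rfl fun i _ => ?_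
          rw [smul_mul_smul_comm, mul_comm]
  -- second wrapper : ∑ left * S right over a product representation
  have sum_mul_antipode_rbr : ∀ m : (H × H),
      ∑ n ∈ (rbr m).index, (rbr m).left n * S ((rbr m).right n)
        = Coalgebra.counit (R := k) (rb.right m) • (1 : H) :=
    fun m => HopfAlgebra.sum_mul_antipode_eq_smul (R := k) (rbr m)
  have sum_mul_antipode_rar : ∀ i : (H × H),
      ∑ j ∈ (rar i).index, (rar i).left j * S ((rar i).right j)
        = Coalgebra.counit (R := k) (ra.right i) • (1 : H) :=
    fun i => HopfAlgebra.sum_mul_antipode_eq_smul (R := k) (rar i)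
  -- the trilinear map in the b-slots
  let G : H →ₗ[k] H →ₗ[k] H →ₗ[k] H := mk₃
    (fun p q z => ∑ i ∈ ra.index, ∑ j ∈ (rar i).index,
      (S (ra.left i * p) * ((rar i).left j * q)) * (S z * S ((rar i).right j)))
    (by intros; simp [add_mul, mul_add, map_add, Finset.sum_add_distrib])
    (by intros; simp [smul_mul_assoc, mul_smul_comm, map_smul, Finset.smul_sum])
    (by intros; simp [add_mul, mul_add, map_add, Finset.sum_add_distrib])
    (by intros; simp [smul_mul_assoc, mul_smul_comm, map_smul, Finset.smul_sum])
    (by intros; simp [add_mul, mul_add, map_add, Finset.sum_add_distrib])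
    (by intros; simp [smul_mul_assoc, mul_smul_comm, map_smul, Finset.smul_sum])
  have keyG := trip G rb rbl rbr
  -- swap the (i,j) and (m,n) summation blocks
  have swap : ∑ i ∈ ra.index, ∑ j ∈ (rar i).index,
      F (ra.left i) ((rar i).left j) ((rar i).right j)
      = ∑ m ∈ rb.index, ∑ n ∈ (rbl m).index,
        G ((rbl m).left n) ((rbl m).right n) (rb.right m) := by
    calc ∑ i ∈ ra.index, ∑ j ∈ (rar i).index, ∑ m ∈ rb.index, ∑ n ∈ (rbl m).index,
          (S (ra.left i * (rbl m).left n) * ((rar i).left j * (rbl m).right n))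
            * (S (rb.right m) * S ((rar i).right j))
        = ∑ i ∈ ra.index, ∑ m ∈ rb.index, ∑ j ∈ (rar i).index, ∑ n ∈ (rbl m).index,
          (S (ra.left i * (rbl m).left n) * ((rar i).left j * (rbl m).right n))
            * (S (rb.right m) * S ((rar i).right j)) :=
          Finset.sum_congr rfl fun i _ => Finset.sum_comm
      _ = ∑ m ∈ rb.index, ∑ i ∈ ra.index, ∑ j ∈ (rar i).index, ∑ n ∈ (rbl m).index,
          (S (ra.left i * (rbl m).left n) * ((rar i).left j * (rbl m).right n))
            * (S (rb.right m) * S ((rar i).right j)) := Finset.sum_comm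
      _ = ∑ m ∈ rb.index, ∑ i ∈ ra.index, ∑ n ∈ (rbl m).index, ∑ j ∈ (rar i).index,
          (S (ra.left i * (rbl m).left n) * ((rar i).left j * (rbl m).right n))
            * (S (rb.right m) * S ((rar i).right j)) :=
          Finset.sum_congr rfl fun m _ => Finset.sum_congr rfl fun i _ => Finset.sum_comm
      _ = ∑ m ∈ rb.index, ∑ n ∈ (rbl m).index, ∑ i ∈ ra.index, ∑ j ∈ (rar i).index,
          (S (ra.left i * (rbl m).left n) * ((rar i).left j * (rbl m).right n))
            * (S (rb.right m) * S ((rar i).right j)) :=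
          Finset.sum_congr rfl fun m _ => Finset.sum_comm
  -- collapse the right-hand side of `keyG`
  have stepC : ∑ m ∈ rb.index, ∑ n ∈ (rbr m).index,
      G (rb.left m) ((rbr m).left n) ((rbr m).right n) = S (a * b) := by
    have inner2 : ∀ m : (H × H), ∑ n ∈ (rbr m).index, ∑ i ∈ ra.index, ∑ j ∈ (rar i).index,
        (S (ra.left i * rb.left m) * ((rar i).left j * (rbr m).left n))
          * (S ((rbr m).right n) * S ((rar i).right j))
        = ∑ i ∈ ra.index,
            (Coalgebra.counit (R := k) (rb.right m) * Coalgebra.counit (R := k) (ra.right i))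
              • S (ra.left i * rb.left m) := by
      intro m
      rw [Finset.sum_comm]
      refine Finset.sum_congr rfl fun i _ => ?_
      rw [Finset.sum_comm]
      calc ∑ j ∈ (rar i).index, ∑ n ∈ (rbr m).index,
            (S (ra.left i * rb.left m) * ((rar i).left j * (rbr m).left n))
              * (S ((rbr m).right n) * S ((rar i).right j))
          = ∑ j ∈ (rar i).index,
              ((S (ra.left i * rb.left m) * (rar i).left j)
                * (∑ n ∈ (rbr m).index, (rbr m).left n * S ((rbr m).right n)))
                * S ((rar i).right j) := by
            refine Finset.sum_congr rfl fun j _ => ?_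
            rw [Finset.mul_sum, Finset.sum_mul]
            refine Finset.sum_congr rfl fun n _ => ?_
            simp only [mul_assoc]
        _ = ∑ j ∈ (rar i).index,
              (Coalgebra.counit (R := k) (rb.right m))
                • ((S (ra.left i * rb.left m)) * ((rar i).left j * S ((rar i).right j))) := by
            refine Finset.sum_congr rfl fun j _ => ?_
            rw [sum_mul_antipode_rbr m]
            simp only [smul_eq_mul, mul_smul_comm, smul_mul_assoc, mul_one]
            rw [mul_assoc]
        _ = (Coalgebra.counit (R := k) (rb.right m) * Coalgebra.counit (R := k) (ra.right i))
              • S (ra.left i * rb.left m) := by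
            rw [← Finset.smul_sum, ← Finset.mul_sum, sum_mul_antipode_rar i]
            simp [smul_smul, mul_smul_comm]
    calc ∑ m ∈ rb.index, ∑ n ∈ (rbr m).index,
          G (rb.left m) ((rbr m).left n) ((rbr m).right n)
        = ∑ m ∈ rb.index, ∑ i ∈ ra.index,
            (Coalgebra.counit (R := k) (rb.right m) * Coalgebra.counit (R := k) (ra.right i))
              • S (ra.left i * rb.left m) :=
          Finset.sum_congr rfl fun m _ => inner2 m
      _ = S (a * b) := by
          conv_rhs => rw [← sum_smul_counit ra, ← sum_smul_counit rb]
          rw [Finset.sum_mul_sum, map_sum, Finset.sum_comm]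
          refine Finset.sum_congr rfl fun m _ => ?_
          rw [map_sum]
          refine Finset.sum_congr rfl fun i _ => ?_
          rw [smul_mul_smul_comm, map_smul, mul_comm]
  rw [stepA] at key
  rw [swap, keyG, stepC] at key
  exact key.symm

section Lam

variable (lam : H →ₗ[k] k)

lemma sepH {u w : H} (h : ∀ f : Module.Dual k H, f u = f w) : u = w := by
  have h0 : ∀ f : Module.Dual k H, f (u - w) = 0 := by
    intro f; rw [map_sub, h f, sub_self]
  exact sub_eq_zero.mp ((Module.forall_dual_apply_eq_zero_iff k (u - w)).mp h0)

lemma integralR (hri : ∀ f : H →ₗ[k] k, conv f lam = f 1 • lam) {x : H} {ι : Type} (r : Repr k x ι) :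
    ∑ i ∈ r.index, lam (r.right i) • r.left i = lam x • 1 := by
  apply sepH (k := k)
  intro f
  have h1 : conv f lam x = ∑ i ∈ r.index, f (r.left i) * lam (r.right i) := by
    simp only [conv, LinearMap.comp_apply]
    rw [← r.eq, map_sum, map_sum]
    simp
  have h2 : conv f lam x = f 1 * lam x := by rw [hri f]; simp
  calc f (∑ i ∈ r.index, lam (r.right i) • r.left i)
      = ∑ i ∈ r.index, f (r.left i) * lam (r.right i) := by
        rw [map_sum]
        refine Finset.sum_congr rfl fun i _ => ?_
        rw [map_smul]
        simp [mul_comm]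
    _ = f 1 * lam x := by rw [← h1, h2]
    _ = f (lam x • (1 : H)) := by rw [map_smul]; simp [mul_comm]

lemma integralR_mul (hri : ∀ f : H →ₗ[k] k, conv f lam = f 1 • lam) {x y : H} {ι ι' : Type} (r : Repr k x ι) (s : Repr k y ι') :
    ∑ j ∈ r.index, ∑ n ∈ s.index,
      lam (r.right j * s.right n) • (r.left j * s.left n) = lam (x * y) • 1 := by
  rw [← Finset.sum_product']
  exact integralR lam hri (mulRepr r s)

/-- Identity (b): `∑ y₁ λ(x y₂) = ∑ S(x₁) λ(x₂ y)`. -/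
lemma bId (hri : ∀ f : H →ₗ[k] k, conv f lam = f 1 • lam)
    (x y : H) {ι ι' : Type} (rx : Repr k x ι) (ry : Repr k y ι') :
    ∑ m ∈ ry.index, lam (x * ry.right m) • ry.left m
      = ∑ i ∈ rx.index, lam (rx.right i * y) • S (rx.left i) := by
  classical
  set rxl : ∀ i : ι, Repr k (rx.left i) (H × H) := fun i => ℛ k (rx.left i) with hrxl
  set rxr : ∀ i : ι, Repr k (rx.right i) (H × H) := fun i => ℛ k (rx.right i) with hrxr
  let T : H →ₗ[k] H →ₗ[k] H →ₗ[k] H := mk₃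
    (fun u w z => ∑ m ∈ ry.index, lam (z * ry.right m) • (S u * (w * ry.left m)))
    (by intros; simp [add_mul, mul_add, map_add, map_smul, smul_add, add_smul, smul_mul_assoc, mul_smul_comm, smul_smul, Finset.smul_sum, Finset.sum_add_distrib, mul_comm])
    (by intros; simp [add_mul, mul_add, map_add, map_smul, smul_add, add_smul, smul_mul_assoc, mul_smul_comm, smul_smul, Finset.smul_sum, Finset.sum_add_distrib, mul_comm])
    (by intros; simp [add_mul, mul_add, map_add, map_smul, smul_add, add_smul, smul_mul_assoc, mul_smul_comm, smul_smul, Finset.smul_sum, Finset.sum_add_distrib, mul_comm])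
    (by intros; simp [add_mul, mul_add, map_add, map_smul, smul_add, add_smul, smul_mul_assoc, mul_smul_comm, smul_smul, Finset.smul_sum, Finset.sum_add_distrib, mul_comm])
    (by intros; simp [add_mul, mul_add, map_add, map_smul, smul_add, add_smul, smul_mul_assoc, mul_smul_comm, smul_smul, Finset.smul_sum, Finset.sum_add_distrib, mul_comm])
    (by intros; simp [add_mul, mul_add, map_add, map_smul, smul_add, add_smul, smul_mul_assoc, mul_smul_comm, smul_smul, Finset.smul_sum, Finset.sum_add_distrib, mul_comm])
  have key := trip T rx rxl rxr
  have lhs : ∑ i ∈ rx.index, ∑ j ∈ (rxl i).index,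
      T ((rxl i).left j) ((rxl i).right j) (rx.right i)
      = ∑ m ∈ ry.index, lam (x * ry.right m) • ry.left m := by
    have hper : ∀ i : ι, ∑ j ∈ (rxl i).index,
        T ((rxl i).left j) ((rxl i).right j) (rx.right i)
        = ∑ m ∈ ry.index, (lam (rx.right i * ry.right m)
            * Coalgebra.counit (R := k) (rx.left i)) • ry.left m := by
      intro i
      calc ∑ j ∈ (rxl i).index, ∑ m ∈ ry.index,
            lam (rx.right i * ry.right m) • (S ((rxl i).left j) * ((rxl i).right j * ry.left m))
          = ∑ m ∈ ry.index, ∑ j ∈ (rxl i).index,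
            lam (rx.right i * ry.right m) • (S ((rxl i).left j) * ((rxl i).right j * ry.left m))
            := Finset.sum_comm
        _ = ∑ m ∈ ry.index, (lam (rx.right i * ry.right m)
              * Coalgebra.counit (R := k) (rx.left i)) • ry.left m := by
            refine Finset.sum_congr rfl fun m _ => ?_
            rw [← Finset.smul_sum]
            have : ∑ j ∈ (rxl i).index,
                S ((rxl i).left j) * ((rxl i).right j * ry.left m)
                = (Coalgebra.counit (R := k) (rx.left i)) • ry.left m := by
              calc ∑ j ∈ (rxl i).index, S ((rxl i).left j) * ((rxl i).right j * ry.left m)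
                  = (∑ j ∈ (rxl i).index, S ((rxl i).left j) * (rxl i).right j) * ry.left m := by
                    rw [Finset.sum_mul]
                    exact Finset.sum_congr rfl fun j _ => by rw [mul_assoc]
                _ = (Coalgebra.counit (R := k) (rx.left i)) • ry.left m := by
                    rw [HopfAlgebra.sum_antipode_mul_eq_smul (R := k) (rxl i), smul_mul_assoc,
                      one_mul]
            rw [this, smul_smul]
    calc ∑ i ∈ rx.index, ∑ j ∈ (rxl i).index,
          T ((rxl i).left j) ((rxl i).right j) (rx.right i)
        = ∑ i ∈ rx.index, ∑ m ∈ ry.index, (lam (rx.right i * ry.right m)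
            * Coalgebra.counit (R := k) (rx.left i)) • ry.left m :=
          Finset.sum_congr rfl fun i _ => hper i
      _ = ∑ m ∈ ry.index, ∑ i ∈ rx.index, (lam (rx.right i * ry.right m)
            * Coalgebra.counit (R := k) (rx.left i)) • ry.left m := Finset.sum_comm
      _ = ∑ m ∈ ry.index, lam (x * ry.right m) • ry.left m := by
          refine Finset.sum_congr rfl fun m _ => ?_
          rw [← Finset.sum_smul]
          congr 1
          calc ∑ i ∈ rx.index, lam (rx.right i * ry.right m)
                * Coalgebra.counit (R := k) (rx.left i)
              = lam ((∑ i ∈ rx.index, Coalgebra.counit (R := k) (rx.left i) • rx.right i)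
                  * ry.right m) := by
                rw [Finset.sum_mul, map_sum]
                refine Finset.sum_congr rfl fun i _ => ?_
                rw [smul_mul_assoc, map_smul]
                simp [mul_comm]
            _ = lam (x * ry.right m) := by rw [sum_counit_smul rx]
  have rhs : ∑ i ∈ rx.index, ∑ j ∈ (rxr i).index,
      T (rx.left i) ((rxr i).left j) ((rxr i).right j)
      = ∑ i ∈ rx.index, lam (rx.right i * y) • S (rx.left i) := by
    refine Finset.sum_congr rfl fun i _ => ?_
    calc ∑ j ∈ (rxr i).index, ∑ m ∈ ry.index,
          lam ((rxr i).right j * ry.right m) • (S (rx.left i) * ((rxr i).left j * ry.left m))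
        = S (rx.left i) * ∑ j ∈ (rxr i).index, ∑ m ∈ ry.index,
            lam ((rxr i).right j * ry.right m) • ((rxr i).left j * ry.left m) := by
          rw [Finset.mul_sum]
          refine Finset.sum_congr rfl fun j _ => ?_
          rw [Finset.mul_sum]
          refine Finset.sum_congr rfl fun m _ => ?_
          rw [mul_smul_comm]
      _ = lam (rx.right i * y) • S (rx.left i) := by
          rw [integralR_mul lam hri (rxr i) ry, mul_smul_comm, mul_one]
  rw [lhs, rhs] at key
  exact key

/-- `∑ x₂ * S³(x₁) = ε(x) • 1`, assuming `S⁴ = id`. -/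
lemma sum_mul_antipode3
    (hS4 : ∀ u : H, HopfAlgebra.antipode (R := k) (HopfAlgebra.antipode (R := k)
      (HopfAlgebra.antipode (R := k) (HopfAlgebra.antipode (R := k) u))) = u)
    {x : H} {ι : Type} (r : Repr k x ι) :
    ∑ i ∈ r.index, r.right i * S (S (S (r.left i)))
      = Coalgebra.counit (R := k) x • (1 : H) := by
  have Sinj : Function.Injective (S : H → H) := by
    intro u w h
    have := congrArg (S) (congrArg (S) (congrArg (S) h))
    rwa [hS4 u, hS4 w] at this
  apply Sinj
  rw [map_sum]
  calc ∑ i ∈ r.index, S (r.right i * S (S (S (r.left i))))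
      = ∑ i ∈ r.index, r.left i * S (r.right i) := by
        refine Finset.sum_congr rfl fun i _ => ?_
        rw [antipode_mul, hS4 (r.left i)]
    _ = Coalgebra.counit (R := k) x • (1 : H) :=
        HopfAlgebra.sum_mul_antipode_eq_smul (R := k) r
    _ = S (Coalgebra.counit (R := k) x • (1 : H)) := by
        rw [map_smul, antipode_one]

/-- Identity (E1): `∑ x₁ λ(x₂ y) = ∑ S³(y₁) λ(x y₂)`. -/
lemma e1Id (hri : ∀ f : H →ₗ[k] k, conv f lam = f 1 • lam)
    (hS4 : ∀ u : H, HopfAlgebra.antipode (R := k) (HopfAlgebra.antipode (R := k)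
      (HopfAlgebra.antipode (R := k) (HopfAlgebra.antipode (R := k) u))) = u)
    (x y : H) {ι ι' : Type} (rx : Repr k x ι) (ry : Repr k y ι') :
    ∑ i ∈ rx.index, lam (rx.right i * y) • rx.left i
      = ∑ m ∈ ry.index, lam (x * ry.right m) • S (S (S (ry.left m))) := by
  classical
  set ryl : ∀ m : ι', Repr k (ry.left m) (H × H) := fun m => ℛ k (ry.left m) with hryl
  set ryr : ∀ m : ι', Repr k (ry.right m) (H × H) := fun m => ℛ k (ry.right m) with hryr
  let T : H →ₗ[k] H →ₗ[k] H →ₗ[k] H := mk₃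
    (fun u w z => ∑ i ∈ rx.index, lam (rx.right i * z) • ((rx.left i * w) * S (S (S u))))
    (by intros; simp [add_mul, mul_add, map_add, map_smul, smul_add, add_smul, smul_mul_assoc, mul_smul_comm, smul_smul, Finset.smul_sum, Finset.sum_add_distrib, mul_comm])
    (by intros; simp [add_mul, mul_add, map_add, map_smul, smul_add, add_smul, smul_mul_assoc, mul_smul_comm, smul_smul, Finset.smul_sum, Finset.sum_add_distrib, mul_comm])
    (by intros; simp [add_mul, mul_add, map_add, map_smul, smul_add, add_smul, smul_mul_assoc, mul_smul_comm, smul_smul, Finset.smul_sum, Finset.sum_add_distrib, mul_comm])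
    (by intros; simp [add_mul, mul_add, map_add, map_smul, smul_add, add_smul, smul_mul_assoc, mul_smul_comm, smul_smul, Finset.smul_sum, Finset.sum_add_distrib, mul_comm])
    (by intros; simp [add_mul, mul_add, map_add, map_smul, smul_add, add_smul, smul_mul_assoc, mul_smul_comm, smul_smul, Finset.smul_sum, Finset.sum_add_distrib, mul_comm])
    (by intros; simp [add_mul, mul_add, map_add, map_smul, smul_add, add_smul, smul_mul_assoc, mul_smul_comm, smul_smul, Finset.smul_sum, Finset.sum_add_distrib, mul_comm])
  have key := trip T ry ryl ryr
  have lhs : ∑ m ∈ ry.index, ∑ n ∈ (ryl m).index,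
      T ((ryl m).left n) ((ryl m).right n) (ry.right m)
      = ∑ i ∈ rx.index, lam (rx.right i * y) • rx.left i := by
    have hper : ∀ m : ι', ∑ n ∈ (ryl m).index,
        T ((ryl m).left n) ((ryl m).right n) (ry.right m)
        = ∑ i ∈ rx.index, (lam (rx.right i * ry.right m)
            * Coalgebra.counit (R := k) (ry.left m)) • rx.left i := by
      intro m
      calc ∑ n ∈ (ryl m).index, ∑ i ∈ rx.index,
            lam (rx.right i * ry.right m)
              • ((rx.left i * (ryl m).right n) * S (S (S ((ryl m).left n))))
          = ∑ i ∈ rx.index, ∑ n ∈ (ryl m).index,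
            lam (rx.right i * ry.right m)
              • ((rx.left i * (ryl m).right n) * S (S (S ((ryl m).left n))))
            := Finset.sum_comm
        _ = ∑ i ∈ rx.index, (lam (rx.right i * ry.right m)
              * Coalgebra.counit (R := k) (ry.left m)) • rx.left i := by
            refine Finset.sum_congr rfl fun i _ => ?_
            rw [← Finset.smul_sum]
            have : ∑ n ∈ (ryl m).index,
                (rx.left i * (ryl m).right n) * S (S (S ((ryl m).left n)))
                = Coalgebra.counit (R := k) (ry.left m) • rx.left i := by
              calc ∑ n ∈ (ryl m).index,
                    (rx.left i * (ryl m).right n) * S (S (S ((ryl m).left n)))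
                  = rx.left i * ∑ n ∈ (ryl m).index,
                      (ryl m).right n * S (S (S ((ryl m).left n))) := by
                    rw [Finset.mul_sum]
                    exact Finset.sum_congr rfl fun n _ => by rw [mul_assoc]
                _ = Coalgebra.counit (R := k) (ry.left m) • rx.left i := by
                    rw [sum_mul_antipode3 hS4 (ryl m), mul_smul_comm, mul_one]
            rw [this, smul_smul]
    calc ∑ m ∈ ry.index, ∑ n ∈ (ryl m).index,
          T ((ryl m).left n) ((ryl m).right n) (ry.right m)
        = ∑ m ∈ ry.index, ∑ i ∈ rx.index, (lam (rx.right i * ry.right m)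
            * Coalgebra.counit (R := k) (ry.left m)) • rx.left i :=
          Finset.sum_congr rfl fun m _ => hper m
      _ = ∑ i ∈ rx.index, ∑ m ∈ ry.index, (lam (rx.right i * ry.right m)
            * Coalgebra.counit (R := k) (ry.left m)) • rx.left i := Finset.sum_comm
      _ = ∑ i ∈ rx.index, lam (rx.right i * y) • rx.left i := by
          refine Finset.sum_congr rfl fun i _ => ?_
          rw [← Finset.sum_smul]
          congr 1
          calc ∑ m ∈ ry.index, lam (rx.right i * ry.right m)
                * Coalgebra.counit (R := k) (ry.left m)
              = lam (rx.right i
                  * ∑ m ∈ ry.index, Coalgebra.counit (R := k) (ry.left m) • ry.right m) := by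
                rw [Finset.mul_sum, map_sum]
                refine Finset.sum_congr rfl fun m _ => ?_
                rw [mul_smul_comm, map_smul]
                simp [mul_comm]
            _ = lam (rx.right i * y) := by rw [sum_counit_smul ry]
  have rhs : ∑ m ∈ ry.index, ∑ n ∈ (ryr m).index,
      T (ry.left m) ((ryr m).left n) ((ryr m).right n)
      = ∑ m ∈ ry.index, lam (x * ry.right m) • S (S (S (ry.left m))) := by
    refine Finset.sum_congr rfl fun m _ => ?_
    calc ∑ n ∈ (ryr m).index, ∑ i ∈ rx.index,
          lam (rx.right i * (ryr m).right n)
            • ((rx.left i * (ryr m).left n) * S (S (S (ry.left m))))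
        = (∑ i ∈ rx.index, ∑ n ∈ (ryr m).index,
            lam (rx.right i * (ryr m).right n) • (rx.left i * (ryr m).left n))
            * S (S (S (ry.left m))) := by
          rw [Finset.sum_comm, Finset.sum_mul]
          refine Finset.sum_congr rfl fun i _ => ?_
          rw [Finset.sum_mul]
          refine Finset.sum_congr rfl fun n _ => ?_
          rw [smul_mul_assoc]
      _ = lam (x * ry.right m) • S (S (S (ry.left m))) := by
          rw [integralR_mul lam hri rx (ryr m), smul_mul_assoc, one_mul]
  rw [lhs, rhs] at key
  exact key

section FinDim

variable [FiniteDimensional k H]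

/-- Contraction of the second (resp. first) tensor factor against a basis coordinate. -/
noncomputable def contr (i : Fin (Module.finrank k H)) : H ⊗[k] H →ₗ[k] H :=
  (TensorProduct.lid k H).toLinearMap ∘ₗ
    (LinearMap.rTensor H ((Module.finBasis k H).coord i))

lemma contr_tmul (i : Fin (Module.finrank k H)) (a w : H) :
    contr i (a ⊗ₜ[k] w) = ((Module.finBasis k H).coord i a) • w := by
  simp [contr]

lemma basisSplit (T : H ⊗[k] H) :
    T = ∑ i : Fin (Module.finrank k H), (Module.finBasis k H) i ⊗ₜ[k] contr i T := by
  induction T using TensorProduct.induction_on with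
  | zero => simp
  | tmul a w =>
      rw [show ∑ i : Fin (Module.finrank k H),
            (Module.finBasis k H) i ⊗ₜ[k] contr i (a ⊗ₜ[k] w)
          = (∑ i : Fin (Module.finrank k H),
              ((Module.finBasis k H).coord i a) • (Module.finBasis k H) i) ⊗ₜ[k] w by
        rw [TensorProduct.sum_tmul]
        exact Finset.sum_congr rfl fun i _ => by
          rw [contr_tmul, TensorProduct.tmul_smul, TensorProduct.smul_tmul']]
      congr 1
      simpa [Module.Basis.coord_apply] using ((Module.finBasis k H).sum_repr a).symm
  | add u v hu hv =>
      conv_lhs => rw [hu, hv]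
      rw [← Finset.sum_add_distrib]
      exact Finset.sum_congr rfl fun i _ => by rw [map_add, TensorProduct.tmul_add]

lemma coeff_zero {c : Fin (Module.finrank k H) → k}
    (h : ∑ i : Fin (Module.finrank k H), c i • (Module.finBasis k H) i = 0)
    (j : Fin (Module.finrank k H)) : c j = 0 := by
  have h2 := congrArg ((Module.finBasis k H).coord j) h
  simpa [map_sum, map_smul, Module.Basis.coord_apply, Module.Basis.repr_self,
    Finsupp.single_apply, Finset.sum_ite_eq] using h2

/-- The basis representation of the comultiplication, as a `Coalgebra.Repr`. -/
noncomputable def brep (w : H) : Repr k w (Fin (Module.finrank k H)) where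
  index := Finset.univ
  left := fun i => (Module.finBasis k H) i
  right := fun i => contr i (Coalgebra.comul (R := k) w)
  eq := (basisSplit (Coalgebra.comul (R := k) w)).symm

/-- Contraction with `λ(v * ·)` in the second slot. -/
noncomputable def appR (lam : H →ₗ[k] k) (v : H) : H ⊗[k] H →ₗ[k] H :=
  (TensorProduct.rid k H).toLinearMap ∘ₗ
    LinearMap.lTensor H (lam ∘ₗ (LinearMap.mulLeft k v))

lemma appR_tmul (lam : H →ₗ[k] k) (v u w : H) :
    appR lam v (u ⊗ₜ[k] w) = lam (v * w) • u := by
  simp [appR]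

lemma appR_reprSum (v : H) {w : H} {ι : Type} (r : Repr k w ι) :
    appR lam v (Coalgebra.comul (R := k) w)
      = ∑ i ∈ r.index, lam (v * r.right i) • r.left i := by
  rw [← r.eq, map_sum]
  simp only [appR_tmul]

/-- `w` is in the right kernel of the pairing `λ(u v)`. -/
def Kprop (w : H) : Prop := ∀ v : H, lam (v * w) = 0

lemma appR_comul_eq_zero (hri : ∀ f : H →ₗ[k] k, conv f lam = f 1 • lam)
    {w : H} (hw : Kprop lam w) (v : H) :
    appR lam v (Coalgebra.comul (R := k) w) = 0 := by
  rw [appR_reprSum lam v (ℛ k w), bId lam hri v w (ℛ k v) (ℛ k w)]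
  refine Finset.sum_eq_zero fun i _ => ?_
  rw [hw ((ℛ k v).right i), zero_smul]

lemma contr_comul_K (hri : ∀ f : H →ₗ[k] k, conv f lam = f 1 • lam)
    {w : H} (hw : Kprop lam w) (i : Fin (Module.finrank k H)) :
    Kprop lam (contr i (Coalgebra.comul (R := k) w)) := by
  intro v
  have h := appR_comul_eq_zero lam hri hw v
  rw [basisSplit (Coalgebra.comul (R := k) w), map_sum] at h
  simp only [appR_tmul] at h
  exact coeff_zero h i

lemma eps_K (hlam : lam ≠ 0) (hri : ∀ f : H →ₗ[k] k, conv f lam = f 1 • lam)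
    {w : H} (hw : Kprop lam w) : Coalgebra.counit (R := k) w = 0 := by
  obtain ⟨v₀, hv₀⟩ : ∃ v : H, lam v ≠ 0 := by
    by_contra h
    push_neg at h
    exact hlam (LinearMap.ext fun v => by simpa using h v)
  have hs := HopfAlgebra.sum_antipode_mul_eq_smul (R := k) (brep (k := k) w)
  have h0 : lam (v₀ * (Coalgebra.counit (R := k) w • 1)) = 0 := by
    rw [← hs, Finset.mul_sum, map_sum]
    refine Finset.sum_eq_zero fun i _ => ?_
    rw [← mul_assoc]
    exact contr_comul_K lam hri hw i _
  rw [mul_smul_comm, mul_one, map_smul, smul_eq_mul] at h0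
  exact (mul_eq_zero.mp h0).resolve_right hv₀

lemma K_zero (hlam : lam ≠ 0) (hri : ∀ f : H →ₗ[k] k, conv f lam = f 1 • lam)
    {w : H} (hw : Kprop lam w) : w = 0 := by
  have h := sum_smul_counit (brep (k := k) w)
  rw [← h]
  refine Finset.sum_eq_zero fun i _ => ?_
  have h2 : Coalgebra.counit (R := k) ((brep (k := k) w).right i) = 0 :=
    eps_K lam hlam hri (contr_comul_K lam hri hw i)
  rw [h2, zero_smul]

lemma U1 (hlam : lam ≠ 0) (hri : ∀ f : H →ₗ[k] k, conv f lam = f 1 • lam)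
    (T : H ⊗[k] H) (h : ∀ v, appR lam v T = 0) : T = 0 := by
  have hK : ∀ i, Kprop lam (contr i T) := by
    intro i v
    have h2 := h v
    rw [basisSplit T, map_sum] at h2
    simp only [appR_tmul] at h2
    exact coeff_zero h2 i
  calc T = ∑ i : Fin (Module.finrank k H), (Module.finBasis k H) i ⊗ₜ[k] contr i T :=
        basisSplit T
    _ = 0 := Finset.sum_eq_zero fun i _ => by
        rw [K_zero lam hlam hri (hK i), TensorProduct.tmul_zero]

end FinDim

end Lam

end QCAux

open QCAux

/-- Let `H` be a finite-dimensional unimodular Hopf algebra with nonzero right integral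
`λ ∈ H*`. Then `λ` is a quantum character: `λ(xy) = λ(S²(y)x)` for all `x, y ∈ H`.
Following the context, unimodularity is encoded by: a nonzero left cointegral `Λ` whose modular
function equals `ε` (i.e. `Λ` is two-sided), the distinguished group-like element of `λ` being
`1` (i.e. `λ · f = f(1) • λ`), and Radford's `S⁴` formula, which under these assumptions reads
`S⁴ = id`. -/
theorem stmt3 {k H : Type} [Field k] [Ring H] [HopfAlgebra k H] [FiniteDimensional k H]
    (lam : H →ₗ[k] k) (hlam : lam ≠ 0)
    (hri : ∀ f : H →ₗ[k] k, conv f lam = f 1 • lam)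
    (hmod : ∀ f : H →ₗ[k] k, conv lam f = f 1 • lam)
    (Λ : H) (hΛ : Λ ≠ 0)
    (hleft : ∀ x : H, x * Λ = Coalgebra.counit (R := k) x • Λ)
    (hright : ∀ x : H, Λ * x = Coalgebra.counit (R := k) x • Λ)
    (hS4 : ∀ x : H, HopfAlgebra.antipode (R := k) (HopfAlgebra.antipode (R := k)
      (HopfAlgebra.antipode (R := k) (HopfAlgebra.antipode (R := k) x))) = x) :
    ∀ x y : H,
      lam (x * y) =
        lam (HopfAlgebra.antipode (R := k) (HopfAlgebra.antipode (R := k) y) * x) := by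
  classical
  intro x y
  -- the pairing map Φ : H → H*, Φ u = λ(· * u), is bijective
  let Φ : H →ₗ[k] Module.Dual k H :=
    { toFun := fun u => lam ∘ₗ LinearMap.mulRight k u
      map_add' := by intros u u'; ext v; simp [mul_add]
      map_smul' := by intros c u; ext v; simp [mul_smul_comm] }
  have hΦinj : Function.Injective Φ := by
    intro u u' h
    have hK : Kprop lam (u - u') := by
      intro v
      have hv := LinearMap.congr_fun h v
      simp only [Φ, LinearMap.coe_mk, AddHom.coe_mk, LinearMap.comp_apply,
        LinearMap.mulRight_apply] at hv
      rw [mul_sub, map_sub, hv, sub_self]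
    exact sub_eq_zero.mp (K_zero lam hlam hri hK)
  have hΦsurj : Function.Surjective Φ :=
    (LinearMap.injective_iff_surjective_of_finrank_eq_finrank
      (Subspace.dual_finrank_eq (K := k) (V := H)).symm).mp hΦinj
  -- the "Nakayama" function τ with λ(y x) = λ(x τ(y))
  have hex : ∀ w : H, ∃ t : H, ∀ v : H, lam (w * v) = lam (v * t) := by
    intro w
    obtain ⟨t, ht⟩ := hΦsurj (lam ∘ₗ LinearMap.mulLeft k w)
    refine ⟨t, fun v => ?_⟩
    have := LinearMap.congr_fun ht v
    simpa [Φ] using this.symm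
  choose τ hτ using hex
  -- λ(Λ) ≠ 0
  have hΛne : lam Λ ≠ 0 := by
    intro h0
    have hz : ∀ v, appR lam v (Coalgebra.comul (R := k) Λ) = 0 := by
      intro v
      rw [appR_reprSum lam v (ℛ k Λ), bId lam hri v Λ (ℛ k v) (ℛ k Λ)]
      refine Finset.sum_eq_zero fun i _ => ?_
      rw [hleft ((ℛ k v).right i), map_smul, h0, smul_zero, zero_smul]
    have hcz := U1 lam hlam hri _ hz
    have h1 := Coalgebra.rTensor_counit_comul (R := k) Λ
    rw [hcz, map_zero] at h1
    have h2 := congrArg (TensorProduct.lid k H) h1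
    simp only [map_zero, TensorProduct.lid_tmul, one_smul] at h2
    exact hΛ h2.symm
  -- ε ∘ τ = ε
  have hepsτ : ∀ w : H, Coalgebra.counit (R := k) (τ w) = Coalgebra.counit (R := k) w := by
    intro w
    have h1 := hτ w Λ
    rw [hleft w, hright (τ w), map_smul, map_smul, smul_eq_mul, smul_eq_mul] at h1
    exact (mul_right_cancel₀ hΛne h1).symm
  -- τ = S²
  have tau_eq : ∀ w : H, τ w = HopfAlgebra.antipode (R := k)
      (HopfAlgebra.antipode (R := k) w) := by
    intro w
    set S : H →ₗ[k] H := HopfAlgebra.antipode (R := k) with hS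
    set ry := ℛ k w with hry
    set rt := ℛ k (τ w) with hrt
    have hT : (∑ i ∈ ry.index, S (ry.left i) ⊗ₜ[k] τ (ry.right i))
        = ∑ m ∈ rt.index, S (S (S (rt.left m))) ⊗ₜ[k] rt.right m := by
      refine sub_eq_zero.mp (U1 lam hlam hri _ ?_)
      intro v
      rw [map_sub]
      have e1 : appR lam v (∑ i ∈ ry.index, S (ry.left i) ⊗ₜ[k] τ (ry.right i))
          = ∑ i ∈ ry.index, lam (ry.right i * v) • S (ry.left i) := by
        rw [map_sum]
        refine Finset.sum_congr rfl fun i _ => ?_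
        rw [appR_tmul, ← hτ (ry.right i) v]
      have e5 : appR lam v (∑ m ∈ rt.index, S (S (S (rt.left m))) ⊗ₜ[k] rt.right m)
          = ∑ m ∈ rt.index, lam (v * rt.right m) • S (S (S (rt.left m))) := by
        rw [map_sum]
        refine Finset.sum_congr rfl fun m _ => ?_
        rw [appR_tmul]
      rw [e1, e5, ← bId lam hri w v ry (ℛ k v)]
      have e3 : ∑ j ∈ (ℛ k v).index, lam (w * (ℛ k v).right j) • (ℛ k v).left j
          = ∑ j ∈ (ℛ k v).index, lam ((ℛ k v).right j * τ w) • (ℛ k v).left j :=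
        Finset.sum_congr rfl fun j _ => by rw [hτ w ((ℛ k v).right j)]
      rw [e3, e1Id lam hri hS4 v (τ w) (ℛ k v) rt, sub_self]
    let G : H ⊗[k] H →ₗ[k] H := (TensorProduct.rid k H).toLinearMap ∘ₗ
      LinearMap.lTensor H (Coalgebra.counit (R := k))
    have hG : ∀ u w' : H, G (u ⊗ₜ[k] w') = Coalgebra.counit (R := k) w' • u := by
      intro u w'; simp [G]
    have h2 := congrArg G hT
    rw [map_sum, map_sum] at h2
    simp only [hG] at h2
    have l1 : ∑ i ∈ ry.index, Coalgebra.counit (R := k) (τ (ry.right i)) • S (ry.left i)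
        = S w := by
      calc ∑ i ∈ ry.index, Coalgebra.counit (R := k) (τ (ry.right i)) • S (ry.left i)
          = ∑ i ∈ ry.index, Coalgebra.counit (R := k) (ry.right i) • S (ry.left i) :=
            Finset.sum_congr rfl fun i _ => by rw [hepsτ]
        _ = S (∑ i ∈ ry.index, Coalgebra.counit (R := k) (ry.right i) • ry.left i) := by
            rw [map_sum]
            exact Finset.sum_congr rfl fun i _ => by rw [map_smul]
        _ = S w := by rw [sum_smul_counit ry]
    have r1 : ∑ m ∈ rt.index, Coalgebra.counit (R := k) (rt.right m) • S (S (S (rt.left m)))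
        = S (S (S (τ w))) := by
      calc ∑ m ∈ rt.index, Coalgebra.counit (R := k) (rt.right m) • S (S (S (rt.left m)))
          = S (S (S (∑ m ∈ rt.index, Coalgebra.counit (R := k) (rt.right m) • rt.left m))) := by
            rw [map_sum, map_sum, map_sum]
            exact Finset.sum_congr rfl fun m _ => by rw [map_smul, map_smul, map_smul]
        _ = S (S (S (τ w))) := by rw [sum_smul_counit rt]
    rw [l1, r1] at h2
    have h3 := congrArg S h2
    rw [hS4 (τ w)] at h3
    exact h3.symm
  rw [hτ (HopfAlgebra.antipode (R := k) (HopfAlgebra.antipode (R := k) y)) x,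
    tau_eq, hS4 y]
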